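/- Let A be an irreducible n×n real stochastic matrix (all entries nonnegative, every row sums to 1, and for all i, j there exists m ≥ 1 with (A^m)_{ij} > 0), and let π be a probability row vector (nonnegative entries summing to 1) with π A = π. If X is an n×n symmetric matrix with nonnegative entries satisfying A X Aᵀ = X, then the row vector π X is a constant multiple of the all-ones vector: there exists c ≥ 0 with Σ_i π_i X_{ij} = c for every j. -/
import Mathlib


open Matrix BigOperators

/-- For an irreducible stochastic matrix `A` with invariant probability vector
`π`, and any nonnegative symmetric solution `X` of `A X Aᵀ = X`, the row
vector `π X` is a constant multiple of the all-ones vector. -/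
theorem invariant_measure_level2_constant {n : ℕ}
    (A : Matrix (Fin n) (Fin n) ℝ)
    (hAnn : ∀ i j, 0 ≤ A i j) (hrow : ∀ i, ∑ j, A i j = 1)
    (hirr : ∀ i j, ∃ m : ℕ, 1 ≤ m ∧ 0 < (A ^ m) i j)
    (π : Fin n → ℝ) (hπnn : ∀ i, 0 ≤ π i) (hπsum : ∑ i, π i = 1)
    (hπA : ∀ j, ∑ i, π i * A i j = π j)
    (X : Matrix (Fin n) (Fin n) ℝ) (hsym : X.IsSymm)
    (hXnn : ∀ i j, 0 ≤ X i j)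
    (hfix : A * X * Aᵀ = X) :
    ∃ c : ℝ, 0 ≤ c ∧ ∀ j, ∑ i, π i * X i j = c := by
  classical
  set v : Fin n → ℝ := fun j => ∑ i, π i * X i j with hv_def
  have hvnn : ∀ j, 0 ≤ v j := fun j =>
    Finset.sum_nonneg fun i _ => mul_nonneg (hπnn i) (hXnn i j)
  -- v is harmonic: v j = ∑ b, A j b * v b
  have hharm : ∀ j, v j = ∑ b, A j b * v b := by
    intro j
    have hX : ∀ k, X k j = ∑ a, ∑ b, A k a * X a b * A j b := by
      intro k
      conv_lhs => rw [← hfix]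
      simp only [Matrix.mul_apply, Matrix.transpose_apply, Finset.sum_mul]
      exact Finset.sum_comm
    calc v j = ∑ k, π k * ∑ a, ∑ b, A k a * X a b * A j b := by
          simp only [hv_def]
          exact Finset.sum_congr rfl fun k _ => by rw [hX k]
      _ = ∑ b, (∑ a, (∑ k, π k * A k a) * X a b) * A j b := by
          simp only [Finset.mul_sum, Finset.sum_mul]
          rw [Finset.sum_comm]
          refine (Finset.sum_congr rfl fun a _ => Finset.sum_comm).trans ?_
          rw [Finset.sum_comm]
          exact Finset.sum_congr rfl fun b _ => Finset.sum_congr rfl fun a _ =>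
            Finset.sum_congr rfl fun k _ => by ring
      _ = ∑ b, A j b * v b := by
          refine Finset.sum_congr rfl fun b _ => ?_
          simp only [hπA, hv_def]
          ring
  -- nonnegativity and row sums of powers
  have hpnn : ∀ m : ℕ, ∀ i j, 0 ≤ (A ^ m) i j := by
    intro m
    induction m with
    | zero => intro i j; simp [Matrix.one_apply]; positivity
    | succ m ih =>
        intro i j
        rw [pow_succ, Matrix.mul_apply]
        exact Finset.sum_nonneg fun k _ => mul_nonneg (ih i k) (hAnn k j)
  have hprow : ∀ m : ℕ, ∀ i, ∑ j, (A ^ m) i j = 1 := by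
    intro m
    induction m with
    | zero => intro i; simp [Matrix.one_apply]
    | succ m ih =>
        intro i
        simp only [pow_succ, Matrix.mul_apply]
        rw [Finset.sum_comm]
        calc ∑ k, ∑ j, (A ^ m) i k * A k j
            = ∑ k, (A ^ m) i k * ∑ j, A k j := by
              simp [Finset.mul_sum]
          _ = 1 := by simp [hrow, ih]
  -- v is harmonic for all powers
  have hharmpow : ∀ m : ℕ, ∀ j, v j = ∑ b, (A ^ m) j b * v b := by
    intro m
    induction m with
    | zero => intro j; simp [Matrix.one_apply]
    | succ m ih =>
        intro j
        calc v j = ∑ b, (A ^ m) j b * v b := ih j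
          _ = ∑ b, (A ^ m) j b * ∑ k, A b k * v k := by
              refine Finset.sum_congr rfl fun b _ => by rw [← hharm b]
          _ = ∑ k, (A ^ (m + 1)) j k * v k := by
              simp only [pow_succ, Matrix.mul_apply, Finset.mul_sum,
                Finset.sum_mul]
              rw [Finset.sum_comm]
              refine Finset.sum_congr rfl fun k _ => ?_
              refine Finset.sum_congr rfl fun b _ => by ring
  rcases Nat.eq_zero_or_pos n with hn | hn
  · exact ⟨0, le_refl 0, fun j => absurd (j.2.trans_le (le_of_eq hn)) (Nat.not_lt_zero _)⟩
  · -- pick maximizer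
    obtain ⟨i0, -, hi0⟩ := Finset.exists_max_image Finset.univ v
      (Finset.univ_nonempty_iff.mpr ⟨⟨0, hn⟩⟩)
    refine ⟨v i0, hvnn i0, fun j => ?_⟩
    obtain ⟨m, -, hm⟩ := hirr i0 j
    have hsum0 : ∑ k, (A ^ m) i0 k * (v i0 - v k) = 0 := by
      have := hharmpow m i0
      have h1 := hprow m i0
      calc ∑ k, (A ^ m) i0 k * (v i0 - v k)
          = (∑ k, (A ^ m) i0 k) * v i0 - ∑ k, (A ^ m) i0 k * v k := by
            rw [Finset.sum_mul, ← Finset.sum_sub_distrib]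
            exact Finset.sum_congr rfl fun k _ => by ring
        _ = 0 := by rw [h1, ← this]; ring
    have hterm : ∀ k ∈ Finset.univ, (0:ℝ) ≤ (A ^ m) i0 k * (v i0 - v k) :=
      fun k _ => mul_nonneg (hpnn m i0 k) (sub_nonneg.mpr (hi0 k (Finset.mem_univ k)))
    have hall := (Finset.sum_eq_zero_iff_of_nonneg hterm).mp hsum0 j (Finset.mem_univ j)
    have : v i0 - v j = 0 := by
      rcases mul_eq_zero.mp hall with h | h
      · exact absurd h (ne_of_gt hm)
      · exact h
    have : v j = v i0 := by linarith
    exact this
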